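/- Let S = (X_0,…,X_{d−1}) be a d-symbol with balanced quotient Q = Q(S) and core C = C(S). Let i ≠ j in {0,…,d−1} with Δ = |X_i| − |X_j| > 0. Then: (i) |H_{ij}^Δ(S)| = |H_{ij}^0(Q)| if i > j, and |H_{ij}^Δ(S)| = |H_{ji}^0(Q)| if i < j; (ii) |H_{ji}^Δ(Q)| + |H_{ij}^0(C)| = |H_{ij}^0(S)| if i > j, and |H_{ji}^Δ(Q)| + |H_{ij}^0(C)| = |H_{ji}^0(S)| if i < j; (iii) |H_{ij}^Δ(S)| + |H_{ij}^0(S)| + |H_{ji}^0(S)| = |H_{ji}^Δ(Q)| + |H_{ij}^0(Q)| + |H_{ji}^0(Q)| + |H_{ij}^0(C)|. -/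
import Mathlib


/-- `X^{+s} = (X + s) ∪ {0,…,s−1}` for a β-set `X`. -/
def shiftUp (X : Finset ℕ) (s : ℕ) : Finset ℕ :=
  X.image (· + s) ∪ Finset.range s

/-- The `d`-symbol `s_d(X)` associated to a β-set `X`:
`X_i^{(d)} = {k ∈ ℕ : i + k*d ∈ X}`. -/
def sd (d : ℕ) (X : Finset ℕ) : Fin d → Finset ℕ :=
  fun i => (X.filter fun a => a % d = (i : ℕ)).image fun a => a / d

/-- The inverse of `s_d`, recovering the β-set of a `d`-symbol. -/
def sdInv (d : ℕ) (S : Fin d → Finset ℕ) : Finset ℕ :=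
  Finset.univ.biUnion fun i => (S i).image fun k => (i : ℕ) + k * d

/-- Hooks of a β-set `X`: pairs `(a,b)` with `a > b`, `a ∈ X`, `b ∉ X`. -/
def betaHooks (X : Finset ℕ) : Finset (ℕ × ℕ) :=
  (X ×ˢ Finset.range (X.sup id + 1)).filter fun p => p.2 < p.1 ∧ p.2 ∉ X

/-- Hooks of a `d`-symbol `S`: quadruples `(a,b,i,j)` with `a ∈ S i`, `b ∉ S j`,
and either `a > b`, or `a = b` and `i > j`. -/
def symbolHooks {d : ℕ} (S : Fin d → Finset ℕ) : Finset (ℕ × ℕ × Fin d × Fin d) :=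
  (Finset.range ((Finset.univ.sup fun i => (S i).sup id) + 1) ×ˢ
      Finset.range ((Finset.univ.sup fun i => (S i).sup id) + 1) ×ˢ
      (Finset.univ : Finset (Fin d)) ×ˢ (Finset.univ : Finset (Fin d))).filter
    fun z => z.1 ∈ S z.2.2.1 ∧ z.2.1 ∉ S z.2.2.2 ∧
      (z.2.1 < z.1 ∨ (z.1 = z.2.1 ∧ z.2.2.2 < z.2.2.1))

/-- The partition `p(X)` of a β-set `X = {a_1 > … > a_t}`, as the multiset of the
nonzero numbers among `a_i − (t−i)`; the element `a` contributes the part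
`a − #{b ∈ X : b < a}`. -/
def partitionOf (X : Finset ℕ) : Multiset ℕ :=
  Multiset.filter (· ≠ 0) (X.val.map fun a => a - (X.filter (· < a)).card)

/-- `r`, the maximal number of parts among the partitions `p(X_i)` of a `d`-symbol. -/
def quotCard {d : ℕ} (S : Fin d → Finset ℕ) : ℕ :=
  Finset.univ.sup fun i => Multiset.card (partitionOf (S i))

/-- `Y` is the balanced quotient `Q(S)` of `S`: each `Y i` is the (unique) β-set of
cardinality `r` with `p(Y i) = p(S i)`, where `r` is the maximal number of parts
among the `p(S i)`. -/
def IsBalancedQuotient {d : ℕ} (S Y : Fin d → Finset ℕ) : Prop :=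
  ∀ i, (Y i).card = quotCard S ∧ partitionOf (Y i) = partitionOf (S i)

/-- The core `C(S) = ([x_0],…,[x_{d−1}])` of a `d`-symbol, `x_i = |X_i|`. -/
def coreSymbol {d : ℕ} (S : Fin d → Finset ℕ) : Fin d → Finset ℕ :=
  fun i => Finset.range (S i).card

/-- The `δ`-length `k(a−b) + c_i − c_j` of a hook `(a,b,i,j)`, for the
`d`-hook data tuple `δ = (c_0,…,c_{d−1};k)`. -/
noncomputable def hookLen {d : ℕ} (c : Fin d → ℝ) (k : ℝ)
    (z : ℕ × ℕ × Fin d × Fin d) : ℝ :=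
  k * ((z.1 - z.2.1 : ℕ) : ℝ) + c z.2.2.1 - c z.2.2.2

/-- The multiset `𝓗^δ(S)` of `δ`-lengths of all hooks of `S`. -/
noncomputable def hookLens {d : ℕ} (c : Fin d → ℝ) (k : ℝ)
    (S : Fin d → Finset ℕ) : Multiset ℝ :=
  (symbolHooks S).val.map (hookLen c k)

/-- `H_{ij}^ℓ(S)`, the set of hooks `(a,b,i,j)` of `S` with `a − b = ℓ`. -/
def Hij {d : ℕ} (S : Fin d → Finset ℕ) (i j : Fin d) (ℓ : ℕ) :
    Finset (ℕ × ℕ × Fin d × Fin d) :=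
  (symbolHooks S).filter fun z => z.2.2.1 = i ∧ z.2.2.2 = j ∧ z.1 - z.2.1 = ℓ

/-- The sign-modified length `h̄^{δ_S}` (on hooks of the balanced quotient), where
`x` records the cardinalities `x_i = |X_i|` of `S`, and `δ_S = (c_i + x_i k; k)`.
For a hook `z = (a,b,u,v)` with `ℓ = a − b`: relabelling so that `Δ = x_i − x_j ≥ 0`,
the sign is `+` if `z` lies in position `(i,j)`, or in position `(j,i)` with `ℓ > Δ`,
or in position `(j,i)` with `ℓ = Δ` and `i < j`; otherwise the sign is `−`. -/
noncomputable def signedLen {d : ℕ} (x : Fin d → ℕ) (c : Fin d → ℝ) (k : ℝ)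
    (z : ℕ × ℕ × Fin d × Fin d) : ℝ :=
  if x z.2.2.2 ≤ x z.2.2.1 then
    k * ((z.1 - z.2.1 : ℕ) : ℝ) + (c z.2.2.1 + (x z.2.2.1 : ℝ) * k)
      - (c z.2.2.2 + (x z.2.2.2 : ℝ) * k)
  else if x z.2.2.2 - x z.2.2.1 < z.1 - z.2.1 ∨
      (z.1 - z.2.1 = x z.2.2.2 - x z.2.2.1 ∧ (z.2.2.2 : ℕ) < (z.2.2.1 : ℕ)) then
    k * ((z.1 - z.2.1 : ℕ) : ℝ) + (c z.2.2.1 + (x z.2.2.1 : ℝ) * k)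
      - (c z.2.2.2 + (x z.2.2.2 : ℝ) * k)
  else
    -(k * ((z.1 - z.2.1 : ℕ) : ℝ) + (c z.2.2.1 + (x z.2.2.1 : ℝ) * k)
      - (c z.2.2.2 + (x z.2.2.2 : ℝ) * k))

/-- The permutation `σ_{d,ℓ,e}` of `ℕ`:
`σ(r(dℓ) + sd + t) = r(dℓ) + sd + ((t + re) mod d)`. -/
def twistFun (d ℓ e : ℕ) (n : ℕ) : ℕ :=
  d * ℓ * (n / (d * ℓ)) + d * (n % (d * ℓ) / d) + (n % d + n / (d * ℓ) * e) % d

namespace CHAux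

def bg (X : Finset ℕ) (a : ℕ) : ℕ := a - (X.filter (· < a)).card

def bm (X : Finset ℕ) : Multiset ℕ := X.val.map (bg X)

def bf (X X' : Finset ℕ) (ℓ : ℕ) : ℕ :=
  (X.filter fun a => ℓ ≤ a ∧ a - ℓ ∉ X').card

lemma partitionOf_eq (X : Finset ℕ) : partitionOf X = Multiset.filter (· ≠ 0) (bm X) := rfl

lemma mem_shiftUp {X : Finset ℕ} {s b : ℕ} :
    b ∈ shiftUp X s ↔ (s ≤ b ∧ b - s ∈ X) ∨ b < s := by
  simp only [shiftUp, Finset.mem_union, Finset.mem_image, Finset.mem_range]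
  constructor
  · rintro (⟨a, ha, rfl⟩ | h)
    · exact Or.inl ⟨by omega, by simpa using ha⟩
    · exact Or.inr h
  · rintro (⟨h1, h2⟩ | h)
    · exact Or.inl ⟨b - s, h2, by omega⟩
    · exact Or.inr h

lemma shiftUp_disj (X : Finset ℕ) (s : ℕ) :
    Disjoint (X.image (· + s)) (Finset.range s) := by
  simp only [Finset.disjoint_left, Finset.mem_image, Finset.mem_range]
  rintro a ⟨b, _, rfl⟩
  omega

lemma shiftUp_card (X : Finset ℕ) (s : ℕ) : (shiftUp X s).card = X.card + s := by
  rw [shiftUp, Finset.card_union_of_disjoint (shiftUp_disj X s),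
    Finset.card_image_of_injective _ (add_left_injective s), Finset.card_range]

lemma shiftUp_shiftUp (X : Finset ℕ) (s t : ℕ) :
    shiftUp (shiftUp X s) t = shiftUp X (s + t) := by
  ext b
  simp only [mem_shiftUp]
  constructor
  · rintro (⟨ht, (⟨hs, hX⟩ | h)⟩ | h)
    · exact Or.inl ⟨by omega, by rwa [Nat.sub_sub, Nat.add_comm] at hX⟩
    · exact Or.inr (by omega)
    · exact Or.inr (by omega)
  · rintro (⟨h, hX⟩ | h)
    · exact Or.inl ⟨by omega, Or.inl ⟨by omega, by rwa [Nat.sub_sub, Nat.add_comm]⟩⟩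
    · by_cases hb : b < t
      · exact Or.inr hb
      · exact Or.inl ⟨by omega, Or.inr (by omega)⟩

lemma bg_shiftUp (X : Finset ℕ) (s a : ℕ) (ha : a ∈ X) :
    bg (shiftUp X s) (a + s) = bg X a := by
  unfold bg
  have : (shiftUp X s).filter (· < a + s) =
      ((X.filter (· < a)).image (· + s)) ∪ Finset.range s := by
    ext b
    simp only [Finset.mem_filter, mem_shiftUp, Finset.mem_union, Finset.mem_image,
      Finset.mem_range]
    constructor
    · rintro ⟨(⟨h1, h2⟩ | h), hb⟩
      · exact Or.inl ⟨b - s, ⟨h2, by omega⟩, by omega⟩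
      · exact Or.inr h
    · rintro (⟨c, ⟨hc, hlt⟩, rfl⟩ | h)
      · exact ⟨Or.inl ⟨by omega, by simpa using hc⟩, by omega⟩
      · exact ⟨Or.inr h, by omega⟩
  have hc : ((shiftUp X s).filter (· < a + s)).card = (X.filter (· < a)).card + s := by
    rw [this, Finset.card_union_of_disjoint (shiftUp_disj _ s),
      Finset.card_image_of_injective _ (add_left_injective s), Finset.card_range]
  rw [hc]
  omega

lemma bg_shiftUp_small (X : Finset ℕ) (s u : ℕ) (hu : u < s) :
    bg (shiftUp X s) u = 0 := by
  unfold bg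
  have : (shiftUp X s).filter (· < u) = Finset.range u := by
    ext b
    simp only [Finset.mem_filter, mem_shiftUp, Finset.mem_range]
    constructor
    · rintro ⟨_, hb⟩; exact hb
    · intro hb; exact ⟨Or.inr (by omega), hb⟩
  rw [this, Finset.card_range]
  omega

lemma bm_shiftUp (X : Finset ℕ) (s : ℕ) :
    bm (shiftUp X s) = bm X + Multiset.replicate s 0 := by
  unfold bm
  have hval : (shiftUp X s).val
      = (X.val.map (· + s)) + (Finset.range s).val := by
    rw [shiftUp, ← Finset.disjUnion_eq_union _ _ (shiftUp_disj X s)]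
    show (X.image (· + s)).val + (Finset.range s).val = _
    congr 1
    have : X.image (· + s) = X.map ⟨(· + s), add_left_injective s⟩ := by
      rw [Finset.map_eq_image]; rfl
    rw [this, Finset.map_val]
    rfl
  rw [hval, Multiset.map_add]
  congr 1
  · rw [Multiset.map_map]
    apply Multiset.map_congr rfl
    intro a ha
    exact bg_shiftUp X s a ha
  · rw [Multiset.eq_replicate]
    constructor
    · simp
    · intro b hb
      obtain ⟨u, hu, rfl⟩ := Multiset.mem_map.mp hb
      have : u < s := by simpa using hu
      exact bg_shiftUp_small X s u this

lemma partitionOf_shiftUp (X : Finset ℕ) (s : ℕ) :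
    partitionOf (shiftUp X s) = partitionOf X := by
  rw [partitionOf_eq, partitionOf_eq, bm_shiftUp, Multiset.filter_add]
  have : Multiset.filter (· ≠ 0) (Multiset.replicate s (0:ℕ)) = 0 := by
    rw [Multiset.filter_eq_nil]
    intro a ha
    simpa using Multiset.eq_of_mem_replicate ha
  rw [this, add_zero]


lemma bg_le_of_mem {X : Finset ℕ} {a : ℕ} (ha : a ∈ X) (hne : X.Nonempty) :
    bg X a ≤ bg X (X.max' hne) := by
  unfold bg
  set M := X.max' hne with hM
  have haM : a ≤ M := Finset.le_max' X a ha
  have h1 : (X.filter (· < a)).card ≤ a := by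
    have : X.filter (· < a) ⊆ Finset.range a := by
      intro b hb
      simp only [Finset.mem_filter] at hb
      simpa using hb.2
    simpa using Finset.card_le_card this
  have h2 : (X.filter (· < M)).card ≤ (X.filter (· < a)).card + (M - a) := by
    have hsub : X.filter (· < M) ⊆ (X.filter (· < a)) ∪ Finset.Ico a M := by
      intro b hb
      simp only [Finset.mem_filter] at hb
      simp only [Finset.mem_union, Finset.mem_filter, Finset.mem_Ico]
      by_cases hba : b < a
      · exact Or.inl ⟨hb.1, hba⟩
      · exact Or.inr ⟨by omega, hb.2⟩
    calc (X.filter (· < M)).card ≤ ((X.filter (· < a)) ∪ Finset.Ico a M).card :=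
          Finset.card_le_card hsub
      _ ≤ (X.filter (· < a)).card + (Finset.Ico a M).card := Finset.card_union_le _ _
      _ = (X.filter (· < a)).card + (M - a) := by rw [Nat.card_Ico]
  omega

lemma bg_max {X : Finset ℕ} (hne : X.Nonempty) :
    bg X (X.max' hne) = X.max' hne - (X.card - 1) := by
  unfold bg
  congr 1
  have : X.filter (· < X.max' hne) = X.erase (X.max' hne) := by
    ext b
    simp only [Finset.mem_filter, Finset.mem_erase]
    constructor
    · rintro ⟨hb, hlt⟩; exact ⟨by omega, hb⟩
    · rintro ⟨hb, hbX⟩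
      exact ⟨hbX, lt_of_le_of_ne (Finset.le_max' X b hbX) hb⟩
  rw [this, Finset.card_erase_of_mem (X.max'_mem hne)]

lemma card_sub_one_le_max {X : Finset ℕ} (hne : X.Nonempty) :
    X.card - 1 ≤ X.max' hne := by
  have : X.erase (X.max' hne) ⊆ Finset.range (X.max' hne) := by
    intro b hb
    simp only [Finset.mem_erase] at hb
    simp only [Finset.mem_range]
    exact lt_of_le_of_ne (Finset.le_max' X b hb.2) hb.1
  have := Finset.card_le_card this
  rw [Finset.card_erase_of_mem (X.max'_mem hne), Finset.card_range] at this
  exact this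

lemma bm_sup {X : Finset ℕ} (hne : X.Nonempty) :
    (bm X).sup = bg X (X.max' hne) := by
  apply le_antisymm
  · apply Multiset.sup_le.mpr
    intro b hb
    obtain ⟨a, ha, rfl⟩ := Multiset.mem_map.mp hb
    exact bg_le_of_mem ha hne
  · exact Multiset.le_sup (Multiset.mem_map_of_mem _ (X.max'_mem hne))

lemma bg_erase_max {X : Finset ℕ} (hne : X.Nonempty) {b : ℕ}
    (hb : b ∈ X.erase (X.max' hne)) :
    bg (X.erase (X.max' hne)) b = bg X b := by
  unfold bg
  congr 2
  ext c
  simp only [Finset.mem_filter, Finset.mem_erase]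
  constructor
  · rintro ⟨⟨_, hc⟩, hlt⟩; exact ⟨hc, hlt⟩
  · rintro ⟨hc, hlt⟩
    simp only [Finset.mem_erase] at hb
    have : b < X.max' hne := lt_of_le_of_ne (Finset.le_max' X b hb.2) hb.1
    exact ⟨⟨by omega, hc⟩, hlt⟩

lemma bm_erase_max {X : Finset ℕ} (hne : X.Nonempty) :
    bm (X.erase (X.max' hne)) = (bm X).erase (bg X (X.max' hne)) := by
  unfold bm
  rw [Finset.erase_val]
  rw [Multiset.map_congr rfl (fun b hb => bg_erase_max hne
    (Finset.mem_def.mpr (by rw [Finset.erase_val]; exact hb)))]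
  exact Multiset.map_erase_of_mem (bg X) X.val (Finset.mem_def.mp (X.max'_mem hne))

lemma bm_inj : ∀ n (X X' : Finset ℕ), X.card = n →
    bm X = bm X' → X = X' := by
  intro n
  induction n using Nat.strong_induction_on with
  | _ n ih =>
    intro X X' hc h
    rcases Finset.eq_empty_or_nonempty X with rfl | hne
    · have : bm X' = 0 := by rw [← h]; rfl
      have : X'.val = 0 := by
        have := congrArg Multiset.card this
        simp only [bm, Multiset.card_map, Multiset.card_zero] at this
        exact Multiset.card_eq_zero.mp this
      exact (Finset.val_eq_zero.mp this).symm ▸ rfl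
    · have hne' : X'.Nonempty := by
        rw [← Finset.card_pos]
        have := congrArg Multiset.card h
        simp only [bm, Multiset.card_map] at this
        rw [← Finset.card_def, ← Finset.card_def] at this
        rw [← this, Finset.card_pos]
        exact hne
      have hcards : X.card = X'.card := by
        have := congrArg Multiset.card h
        simpa only [bm, Multiset.card_map, ← Finset.card_def] using this
      have hsup : bg X (X.max' hne) = bg X' (X'.max' hne') := by
        rw [← bm_sup hne, ← bm_sup hne', h]
      have hmax : X.max' hne = X'.max' hne' := by
        have e1 := bg_max hne
        have e2 := bg_max hne'
        have l1 := card_sub_one_le_max hne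
        have l2 := card_sub_one_le_max hne'
        omega
      have herase : bm (X.erase (X.max' hne)) = bm (X'.erase (X'.max' hne')) := by
        rw [bm_erase_max hne, bm_erase_max hne', h, hsup]
      have hIH := ih (X.card - 1) (by
          have := Finset.card_pos.mpr hne
          omega)
        (X.erase (X.max' hne)) (X'.erase (X'.max' hne'))
        (by rw [Finset.card_erase_of_mem (X.max'_mem hne)]) herase
      have : insert (X.max' hne) (X.erase (X.max' hne))
          = insert (X'.max' hne') (X'.erase (X'.max' hne')) := by
        rw [hIH, hmax]
      rwa [Finset.insert_erase (X.max'_mem hne),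
        Finset.insert_erase (X'.max'_mem hne')] at this

lemma eq_of_card_partition {X X' : Finset ℕ} (hc : X.card = X'.card)
    (hp : partitionOf X = partitionOf X') : X = X' := by
  apply bm_inj X.card X X' rfl
  have key : ∀ Z : Finset ℕ, bm Z = partitionOf Z
      + Multiset.replicate (Z.card - Multiset.card (partitionOf Z)) 0 := by
    intro Z
    conv_lhs => rw [← Multiset.filter_add_not (· ≠ 0) (bm Z)]
    rw [partitionOf_eq]
    congr 1
    have hrep : Multiset.filter (fun a => ¬ a ≠ 0) (bm Z)
        = Multiset.replicate (Multiset.card (Multiset.filter (fun a => ¬ a ≠ 0) (bm Z))) 0 := by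
      rw [Multiset.eq_replicate_card]
      intro b hb
      have := (Multiset.mem_filter.mp hb).2
      omega
    rw [hrep]
    congr 1
    have : Multiset.card (bm Z) = Z.card := by
      simp only [bm, Multiset.card_map]; rfl
    have hsplit := congrArg Multiset.card (Multiset.filter_add_not (· ≠ 0) (bm Z))
    rw [Multiset.card_add] at hsplit
    rw [← partitionOf_eq] at hsplit ⊢
    omega
  rw [key X, key X', hp, hc]


lemma bf_zero (X X' : Finset ℕ) : bf X X' 0 = (X \ X').card := by
  unfold bf
  congr 1
  ext a
  simp [Finset.mem_sdiff, Finset.mem_filter]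

lemma bf_shift_right (X X' : Finset ℕ) (ℓ t : ℕ) :
    bf X (shiftUp X' t) ℓ = bf X X' (ℓ + t) := by
  unfold bf
  congr 1
  apply Finset.filter_congr
  intro a _
  simp only [mem_shiftUp, Nat.sub_sub]
  constructor
  · rintro ⟨h1, h2⟩
    push_neg at h2
    exact ⟨by omega, h2.1 (by omega)⟩
  · rintro ⟨h1, h2⟩
    refine ⟨by omega, ?_⟩
    push_neg
    exact ⟨fun _ => h2, by omega⟩

lemma bf_shift_left (X X' : Finset ℕ) (ℓ t : ℕ) (h : t ≤ ℓ) :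
    bf (shiftUp X t) X' ℓ = bf X X' (ℓ - t) := by
  unfold bf shiftUp
  rw [Finset.filter_union]
  have h1 : (Finset.range t).filter (fun a => ℓ ≤ a ∧ a - ℓ ∉ X') = ∅ := by
    apply Finset.filter_false_of_mem
    intro u hu
    simp only [Finset.mem_range] at hu
    rintro ⟨h2, _⟩
    omega
  rw [h1, Finset.union_empty, Finset.filter_image,
    Finset.card_image_of_injective _ (add_left_injective t)]
  congr 1
  apply Finset.filter_congr
  intro a _
  have e : a + t - ℓ = a - (ℓ - t) := by omega
  rw [e]
  constructor
  · rintro ⟨h1, h2⟩; exact ⟨by omega, h2⟩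
  · rintro ⟨h1, h2⟩; exact ⟨by omega, h2⟩

lemma bf_shift (X X' : Finset ℕ) (ℓ t t' : ℕ) (h : t ≤ ℓ + t') :
    bf (shiftUp X t) (shiftUp X' t') ℓ = bf X X' (ℓ + t' - t) := by
  rw [bf_shift_right, bf_shift_left _ _ _ _ h]


lemma le_supSup {d : ℕ} (S : Fin d → Finset ℕ) {i : Fin d} {a : ℕ} (ha : a ∈ S i) :
    a ≤ Finset.univ.sup fun k => (S k).sup id :=
  le_trans (Finset.le_sup (f := id) ha)
    (Finset.le_sup (f := fun k => (S k).sup id) (Finset.mem_univ i))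

lemma Hij_pos {d : ℕ} (S : Fin d → Finset ℕ) (i j : Fin d) (ℓ : ℕ) (hl : 0 < ℓ) :
    Hij S i j ℓ =
      ((S i).filter fun a => ℓ ≤ a ∧ a - ℓ ∉ S j).image fun a => (a, a - ℓ, i, j) := by
  ext ⟨a, b, u, v⟩
  simp only [Hij, symbolHooks, Finset.mem_filter, Finset.mem_image, Finset.mem_product,
    Finset.mem_range, Finset.mem_univ, and_true, true_and]
  constructor
  · rintro ⟨⟨⟨h1, h2⟩, hmem, hnot, hor⟩, hu, hv, hsub⟩
    subst hu; subst hv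
    have hba : b < a := by
      rcases hor with h | ⟨h, _⟩
      · exact h
      · omega
    refine ⟨a, ⟨hmem, by omega, by rw [show a - ℓ = b by omega]; exact hnot⟩, ?_⟩
    have : a - ℓ = b := by omega
    rw [this]
  · rintro ⟨c, ⟨hc, hlc, hnc⟩, heq⟩
    obtain ⟨rfl, rfl, rfl, rfl⟩ : c = a ∧ c - ℓ = b ∧ i = u ∧ j = v := by
      simpa [Prod.ext_iff] using heq
    have hle := le_supSup S hc
    refine ⟨⟨⟨by omega, by omega⟩, hc, hnc, Or.inl (by omega)⟩, rfl, rfl, by omega⟩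

lemma Hij_card_pos {d : ℕ} (S : Fin d → Finset ℕ) (i j : Fin d) (ℓ : ℕ) (hl : 0 < ℓ) :
    (Hij S i j ℓ).card = bf (S i) (S j) ℓ := by
  rw [Hij_pos S i j ℓ hl, Finset.card_image_of_injective, bf]
  intro a b h
  simpa using congrArg Prod.fst h

lemma Hij_zero_lt {d : ℕ} (S : Fin d → Finset ℕ) (i j : Fin d) (h : j < i) :
    Hij S i j 0 = ((S i) \ (S j)).image fun a => (a, a, i, j) := by
  ext ⟨a, b, u, v⟩
  simp only [Hij, symbolHooks, Finset.mem_filter, Finset.mem_image, Finset.mem_product,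
    Finset.mem_range, Finset.mem_univ, and_true, true_and, Finset.mem_sdiff]
  constructor
  · rintro ⟨⟨⟨h1, h2⟩, hmem, hnot, hor⟩, hu, hv, hsub⟩
    subst hu; subst hv
    have hab : a = b := by
      rcases hor with hlt | ⟨he, _⟩
      · omega
      · exact he
    subst hab
    exact ⟨a, ⟨hmem, hnot⟩, rfl⟩
  · rintro ⟨c, ⟨hc, hnc⟩, heq⟩
    obtain ⟨rfl, rfl, rfl, rfl⟩ : c = a ∧ c = b ∧ i = u ∧ j = v := by
      simpa [Prod.ext_iff] using heq
    have hle := le_supSup S hc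
    exact ⟨⟨⟨by omega, by omega⟩, hc, hnc, Or.inr ⟨rfl, h⟩⟩, rfl, rfl, by omega⟩

lemma Hij_card_zero_lt {d : ℕ} (S : Fin d → Finset ℕ) (i j : Fin d) (h : j < i) :
    (Hij S i j 0).card = ((S i) \ (S j)).card := by
  rw [Hij_zero_lt S i j h, Finset.card_image_of_injective]
  intro a b hab
  simpa using congrArg Prod.fst hab

lemma Hij_zero_empty {d : ℕ} (S : Fin d → Finset ℕ) (i j : Fin d) (h : ¬ j < i) :
    Hij S i j 0 = ∅ := by
  rw [Finset.eq_empty_iff_forall_notMem]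
  rintro ⟨a, b, u, v⟩ hz
  simp only [Hij, symbolHooks, Finset.mem_filter, Finset.mem_product] at hz
  obtain ⟨⟨_, _, _, hor⟩, hu, hv, hsub⟩ := hz
  subst hu; subst hv
  rcases hor with hlt | ⟨he, hvu⟩
  · omega
  · exact h hvu

end CHAux

open CHAux

/-- For `i ≠ j` with `Δ = |X_i| − |X_j| > 0`:
(i) `|H_{ij}^Δ(S)| = |H_{ij}^0(Q)|` if `i > j`, and `|H_{ij}^Δ(S)| = |H_{ji}^0(Q)|`
if `i < j`;
(ii) `|H_{ji}^Δ(Q)| + |H_{ij}^0(C)| = |H_{ij}^0(S)|` if `i > j`, and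
`|H_{ji}^Δ(Q)| + |H_{ij}^0(C)| = |H_{ji}^0(S)|` if `i < j`;
(iii) `|H_{ij}^Δ(S)| + |H_{ij}^0(S)| + |H_{ji}^0(S)|
  = |H_{ji}^Δ(Q)| + |H_{ij}^0(Q)| + |H_{ji}^0(Q)| + |H_{ij}^0(C)|`. -/
theorem card_Hij_delta_and_zero (d : ℕ) (hd : 0 < d) (S Y : Fin d → Finset ℕ)
    (hY : IsBalancedQuotient S Y) (i j : Fin d) (hij : i ≠ j)
    (Δ : ℕ) (hΔ : Δ = (S i).card - (S j).card) (hΔpos : (S j).card < (S i).card) :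
    ((j < i → (Hij S i j Δ).card = (Hij Y i j 0).card) ∧
      (i < j → (Hij S i j Δ).card = (Hij Y j i 0).card)) ∧
    ((j < i → (Hij Y j i Δ).card + (Hij (coreSymbol S) i j 0).card = (Hij S i j 0).card) ∧
      (i < j → (Hij Y j i Δ).card + (Hij (coreSymbol S) i j 0).card = (Hij S j i 0).card)) ∧
    ((Hij S i j Δ).card + (Hij S i j 0).card + (Hij S j i 0).card =
      (Hij Y j i Δ).card + (Hij Y i j 0).card + (Hij Y j i 0).card +
        (Hij (coreSymbol S) i j 0).card) := by
  classical
  obtain ⟨hciY, hpiY⟩ := hY i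
  obtain ⟨hcjY, hpjY⟩ := hY j
  have hΔ0 : 0 < Δ := by omega
  have Ei : shiftUp (Y i) (S i).card = shiftUp (S i) (quotCard S) := by
    apply eq_of_card_partition
    · rw [shiftUp_card, shiftUp_card, hciY]; omega
    · rw [partitionOf_shiftUp, partitionOf_shiftUp, hpiY]
  have Ej : shiftUp (Y j) (S j).card = shiftUp (S j) (quotCard S) := by
    apply eq_of_card_partition
    · rw [shiftUp_card, shiftUp_card, hcjY]; omega
    · rw [partitionOf_shiftUp, partitionOf_shiftUp, hpjY]
  have hYjx : shiftUp (Y j) (S i).card = shiftUp (S j) (quotCard S + Δ) := by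
    rw [show (S i).card = (S j).card + Δ by omega, ← shiftUp_shiftUp, Ej, shiftUp_shiftUp]
  have key1 : bf (Y i) (Y j) 0 = bf (S i) (S j) Δ := by
    have h1 := bf_shift (Y i) (Y j) 0 (S i).card (S i).card (by omega)
    have h2 := bf_shift (S i) (S j) 0 (quotCard S) (quotCard S + Δ) (by omega)
    rw [Ei, hYjx] at h1
    rw [show 0 + (S i).card - (S i).card = 0 by omega] at h1
    rw [show 0 + (quotCard S + Δ) - quotCard S = Δ by omega] at h2
    exact h1.symm.trans h2
  have key2 : bf (Y j) (Y i) Δ = bf (S j) (S i) 0 := by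
    have h1 := bf_shift (Y j) (Y i) Δ (S i).card (S i).card (by omega)
    have h2 := bf_shift (S j) (S i) Δ (quotCard S + Δ) (quotCard S) (by omega)
    rw [Ei, hYjx] at h1
    rw [show Δ + (S i).card - (S i).card = Δ by omega] at h1
    rw [show Δ + quotCard S - (quotCard S + Δ) = 0 by omega] at h2
    exact h1.symm.trans h2
  have q : (Y i \ Y j).card = (Y j \ Y i).card :=
    Finset.card_sdiff_comm (by rw [hciY, hcjY])
  have p1 := Finset.card_sdiff_add_card_inter (S i) (S j)
  have p2 := Finset.card_sdiff_add_card_inter (S j) (S i)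
  have pint : ((S i) ∩ (S j)).card = ((S j) ∩ (S i)).card := by rw [Finset.inter_comm]
  have hcoreΔ : ((coreSymbol S) i \ (coreSymbol S) j).card = Δ := by
    show (Finset.range (S i).card \ Finset.range (S j).card).card = Δ
    rw [Finset.card_sdiff_of_subset (Finset.range_subset_range.mpr (by omega)), Finset.card_range,
      Finset.card_range]
    omega
  refine ⟨⟨?_, ?_⟩, ⟨?_, ?_⟩, ?_⟩
  · intro h
    rw [Hij_card_pos S i j Δ hΔ0, Hij_card_zero_lt Y i j h, ← bf_zero, key1]
  · intro h
    rw [Hij_card_pos S i j Δ hΔ0, Hij_card_zero_lt Y j i h, ← q, ← bf_zero, key1]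
  · intro h
    rw [Hij_card_pos Y j i Δ hΔ0, key2, bf_zero, Hij_card_zero_lt S i j h,
      Hij_card_zero_lt (coreSymbol S) i j h, hcoreΔ]
    omega
  · intro h
    rw [Hij_card_pos Y j i Δ hΔ0, key2, bf_zero, Hij_card_zero_lt S j i h,
      Hij_zero_empty (coreSymbol S) i j h.asymm, Finset.card_empty]
    omega
  · rcases hij.lt_or_gt with h | h
    · rw [Hij_card_pos S i j Δ hΔ0, Hij_card_pos Y j i Δ hΔ0, key2, bf_zero,
        Hij_zero_empty S i j h.asymm, Hij_zero_empty Y i j h.asymm,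
        Hij_zero_empty (coreSymbol S) i j h.asymm, Finset.card_empty,
        Hij_card_zero_lt S j i h, Hij_card_zero_lt Y j i h, ← q, ← bf_zero 
          (Y i) (Y j), key1]
      omega
    · rw [Hij_card_pos S i j Δ hΔ0, Hij_card_pos Y j i Δ hΔ0, key2, bf_zero,
        Hij_zero_empty S j i h.asymm, Hij_zero_empty Y j i h.asymm, Finset.card_empty,
        Hij_card_zero_lt S i j h, Hij_card_zero_lt Y i j h, ← bf_zero (Y i) (Y j), key1,
        Hij_card_zero_lt (coreSymbol S) i j h, hcoreΔ]
      omega
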